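/- Let p be a monic polynomial of degree d over ℂ of the form p(Z) = Z^d − a·Z^{d−1} + (lower order terms). For any z ∈ ℂ^d with pairwise distinct entries, the sum of the entries of W_p(z) equals a, where W_p is the Weierstrass iteration. That is, the hyperplane {z : z₁ + ⋯ + z_d = a} contains the image of W_p. -/

import Mathlib

open Polynomial Finset

lemma leadingCoeff_basisDivisor {x y : ℂ} :
    (Lagrange.basisDivisor x y).leadingCoeff = (x - y)⁻¹ := by
  rcases eq_or_ne x y with rfl | h
  · simp [Lagrange.basisDivisor_self]
  · rw [Lagrange.basisDivisor, leadingCoeff_mul, leadingCoeff_C,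
      leadingCoeff_X_sub_C, mul_one]

lemma coeff_basis_pred (d : ℕ) (hd : 0 < d) (z : Fin d → ℂ) (hz : Function.Injective z)
    (k : Fin d) :
    (Lagrange.basis univ z k).coeff (d - 1) =
      (∏ j ∈ univ.erase k, (z k - z j))⁻¹ := by
  have hnd : (Lagrange.basis univ z k).natDegree = d - 1 := by
    have := Lagrange.natDegree_basis (hz.injOn) (mem_univ k)
    simpa [Finset.card_univ] using this
  rw [← hnd, Polynomial.coeff_natDegree, Lagrange.basis, leadingCoeff_prod]
  simp_rw [leadingCoeff_basisDivisor]
  rw [← Finset.prod_inv_distrib]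

/-- Invariant hyperplane for the Weierstrass method: if `p` is monic of degree `d`
with coefficient of `Z^(d-1)` equal to `-a`, and `z ∈ ℂ^d` has pairwise distinct
entries, then the entries of `W_p(z)` sum to `a`. -/
theorem weierstrass_invariant_hyperplane
    (d : ℕ) (hd : 0 < d) (p : Polynomial ℂ) (hmonic : p.Monic)
    (hdeg : p.natDegree = d) (a : ℂ) (hcoeff : p.coeff (d - 1) = -a)
    (W : (Fin d → ℂ) → Fin d → ℂ)
    (hW : ∀ (z : Fin d → ℂ) (k : Fin d),
      W z k = z k - p.eval (z k) / ∏ j ∈ univ.erase k, (z k - z j))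
    (z : Fin d → ℂ) (hz : Function.Injective z) :
    ∑ k, W z k = a := by
  classical
  set n : Polynomial ℂ := Lagrange.nodal univ z with hn
  have hnmonic : n.Monic := Lagrange.nodal_monic
  have hndeg : n.natDegree = d := by simp [hn, Lagrange.natDegree_nodal, Finset.card_univ]
  have hp0 : p ≠ 0 := hmonic.ne_zero
  set q : Polynomial ℂ := p - n with hq
  have hqdeg : q.degree < d := by
    have h1 : p.degree = n.degree := by
      rw [degree_eq_natDegree hp0, degree_eq_natDegree hnmonic.ne_zero, hdeg, hndeg]
    have := Polynomial.degree_sub_lt h1 hp0 (by rw [hmonic.leadingCoeff, hnmonic.leadingCoeff])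
    calc q.degree < p.degree := this
      _ = d := by rw [degree_eq_natDegree hp0, hdeg]
  have hcard : (#(univ : Finset (Fin d)) : WithBot ℕ) = (d : WithBot ℕ) := by
    simp [Finset.card_univ]
  have hqint : q = Lagrange.interpolate univ z (fun i => p.eval (z i)) := by
    have h1 : q = Lagrange.interpolate univ z (fun i => q.eval (z i)) :=
      Lagrange.eq_interpolate hz.injOn (by rw [hcard]; exact hqdeg)
    rw [h1]
    apply Lagrange.interpolate_eq_of_values_eq_on
    intro i _
    simp [hq, hn, Lagrange.eval_nodal_at_node (mem_univ i)]
  -- compare coefficients at d - 1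
  have hkey : (∑ k, z k) - a =
      ∑ k, p.eval (z k) * (∏ j ∈ univ.erase k, (z k - z j))⁻¹ := by
    have hL : q.coeff (d - 1) = (∑ k, z k) - a := by
      have hnc : n.coeff (d - 1) = -∑ k, z k := by
        have := prod_X_sub_C_coeff_card_pred (univ : Finset (Fin d)) z
          (by simpa [Finset.card_univ] using hd)
        rw [hn, Lagrange.nodal_eq]
        simpa [Finset.card_univ] using this
      rw [hq, Polynomial.coeff_sub, hcoeff, hnc]
      ring
    have hR : q.coeff (d - 1) =
        ∑ k, p.eval (z k) * (∏ j ∈ univ.erase k, (z k - z j))⁻¹ := by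
      rw [hqint, Lagrange.interpolate_apply, Polynomial.finset_sum_coeff]
      refine Finset.sum_congr rfl fun k _ => ?_
      rw [Polynomial.coeff_C_mul, coeff_basis_pred d hd z hz k]
    rw [← hL, hR]
  have : ∑ k, W z k = (∑ k, z k) - ∑ k, p.eval (z k) * (∏ j ∈ univ.erase k, (z k - z j))⁻¹ := by
    rw [← Finset.sum_sub_distrib]
    refine Finset.sum_congr rfl fun k _ => ?_
    rw [hW, div_eq_mul_inv]
  rw [this, ← hkey]
  ring
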